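/- For p = 103, there exist no x, y in ZMod 103 with x*y = -2 such that the matrix b = ![![1, x], ![y, -1]] together with a = ![![-1, 1], ![-1, 0]] satisfies the relations a^3 = 1, b^4 = 1, (a, b^2) = 1, and a*b*(a*b⁻¹)^3 = 1 generating the group ⟨2,3,4⟩. -/
import Mathlib

set_option maxRecDepth 4000 in
lemma aux234 : ∀ x y : ZMod 103, x * y = -2 →
    -((x + 1) * x) + -((1 + -y) * (x + 1)) + -(((1 + -y) * (1 + -y) + (x + 1)) * (1 + -y)) +
      -(x * ((1 + -y + x) * (1 + -y) + (x + 1 + x * x))) ≠ 0 := by decide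

theorem no_coxeter_234_rep_mod_103 :
    ¬ ∃ x y : ZMod 103, x * y = -2 ∧
      ∀ a b : Matrix (Fin 2) (Fin 2) (ZMod 103),
        a = !![-1, 1; -1, 0] → b = !![1, x; y, -1] →
        a ^ 3 = 1 ∧ b ^ 4 = 1 ∧ a * b ^ 2 = b ^ 2 * a ∧ (a * b) * (a * b⁻¹) ^ 3 = 1 := by
  rintro ⟨x, y, hxy, h⟩
  obtain ⟨-, -, -, h4⟩ := h _ _ rfl rfl
  have hbinv : (!![1, x; y, -1] : Matrix (Fin 2) (Fin 2) (ZMod 103))⁻¹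
      = -(!![1, x; y, -1]) := by
    apply Matrix.inv_eq_right_inv
    ext i j
    fin_cases i <;> fin_cases j <;>
      simp [Matrix.mul_apply, Fin.sum_univ_two, Matrix.one_apply] <;>
      linear_combination -hxy
  rw [hbinv] at h4
  have h10 := congrFun (congrFun h4 1) 0
  simp [pow_succ, Matrix.mul_apply, Fin.sum_univ_two, Matrix.one_apply] at h10
  exact aux234 x y hxy h10
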